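/- Let n ≥ 1 and let t_1, …, t_{n+1} be pairwise distinct real numbers. Let V be the (n+1)×(n+1) Vandermonde matrix with entries V_{i,j} = t_i^{j−1}. Then V = F_n · F_{n−1} · ⋯ · F_1 · D · G_1 · G_2 · ⋯ · G_n, where: for i = 1, …, n, F_i is the (n+1)×(n+1) lower bidiagonal matrix with unit diagonal whose only possibly nonzero off-diagonal entries are (F_i)_{p,p−1} = m_{p,p−i} for p = i+1, …, n+1, with m_{p,q} := ∏_{k=1}^{q−1} (t_p − t_{p−k})/(t_{p−1} − t_{p−k−1}); D is the diagonal matrix with diagonal entries p_i = ∏_{k=1}^{i−1}(t_i − t_k); and for i = 1, …, n, G_i is the (n+1)×(n+1) upper bidiagonal matrix with unit diagonal whose only possibly nonzero off-diagonal entries are (G_i)_{p−1,p} = t_{p−i} for p = i+1, …, n+1 (empty products equal 1). -/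

import Mathlib

open Finset

/-- Off-diagonal entries of the bidiagonal factorization (1-based indices):
`m_{p,q} = ∏_{k=1}^{q−1} (t_p − t_{p−k})/(t_{p−1} − t_{p−k−1})`. -/
noncomputable def mEntry (t : ℕ → ℝ) (p q : ℕ) : ℝ :=
  ∏ k ∈ Finset.Icc 1 (q - 1), (t p - t (p - k)) / (t (p - 1) - t (p - k - 1))

/-- Diagonal entries `p_i = ∏_{k=1}^{i−1} (t_i − t_k)` (1-based index `i`). -/
noncomputable def pEntry (t : ℕ → ℝ) (i : ℕ) : ℝ :=
  ∏ k ∈ Finset.Icc 1 (i - 1), (t i - t k)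

/-- `F_i`: lower bidiagonal matrix with unit diagonal whose only possibly
nonzero off-diagonal entries are `(F_i)_{p,p−1} = m_{p,p−i}` for
`p = i+1, …, n+1` (1-based `p`). -/
noncomputable def Fmat (n : ℕ) (t : ℕ → ℝ) (i : ℕ) :
    Matrix (Fin (n + 1)) (Fin (n + 1)) ℝ :=
  Matrix.of fun p q =>
    if p.val = q.val then 1
    else if p.val = q.val + 1 ∧ i ≤ p.val then mEntry t (p.val + 1) (p.val + 1 - i)
    else 0

/-- The diagonal matrix `D` with entries `p_1, …, p_{n+1}`. -/
noncomputable def Dmat (n : ℕ) (t : ℕ → ℝ) :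
    Matrix (Fin (n + 1)) (Fin (n + 1)) ℝ :=
  Matrix.diagonal fun i => pEntry t (i.val + 1)

/-- `G_i`: upper bidiagonal matrix with unit diagonal whose only possibly
nonzero off-diagonal entries are `(G_i)_{p−1,p} = t_{p−i}` for
`p = i+1, …, n+1` (1-based `p`). -/
noncomputable def Gmat (n : ℕ) (t : ℕ → ℝ) (i : ℕ) :
    Matrix (Fin (n + 1)) (Fin (n + 1)) ℝ :=
  Matrix.of fun p q =>
    if p.val = q.val then 1
    else if q.val = p.val + 1 ∧ i ≤ q.val then t (q.val + 1 - i)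
    else 0

/-! ### Auxiliary machinery -/

/-- `hh2 t a v m` is the complete homogeneous symmetric polynomial of degree `m`
in the variables `t a, t (a+1), …, t (a+v-1)`. -/
noncomputable def hh2 (t : ℕ → ℝ) (a : ℕ) : ℕ → ℕ → ℝ
  | _, 0 => 1
  | 0, _ + 1 => 0
  | v + 1, m + 1 => hh2 t a v (m + 1) + t (a + v) * hh2 t a (v + 1) m

lemma hh2_m0 (t : ℕ → ℝ) (a v : ℕ) : hh2 t a v 0 = 1 := by cases v <;> simp [hh2]

lemma hh2_v0 (t : ℕ → ℝ) (a m : ℕ) : hh2 t a 0 (m + 1) = 0 := by simp [hh2]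

lemma hh2_succ (t : ℕ → ℝ) (a v m : ℕ) :
    hh2 t a (v + 1) (m + 1) = hh2 t a v (m + 1) + t (a + v) * hh2 t a (v + 1) m := by
  simp [hh2]

lemma hh2_peel (t : ℕ → ℝ) (a : ℕ) : ∀ v, ∀ m,
    hh2 t a (v + 1) (m + 1) = hh2 t (a + 1) v (m + 1) + t a * hh2 t a (v + 1) m := by
  intro v
  induction v with
  | zero =>
    intro m
    rw [hh2_succ, hh2_v0, hh2_v0, Nat.add_zero]
  | succ v ih =>
    intro m
    induction m with
    | zero =>
      have e1 := hh2_succ t a (v + 1) 0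
      have e2 := hh2_succ t (a + 1) v 0
      rw [show a + 1 + v = a + (v + 1) by omega] at e2
      have e3 := ih 0
      simp only [hh2_m0] at e1 e2 e3 ⊢
      linear_combination e1 + e3 - e2
    | succ m ihm =>
      have e1 := hh2_succ t a (v + 1) (m + 1)
      have e2 := hh2_succ t (a + 1) v (m + 1)
      rw [show a + 1 + v = a + (v + 1) by omega] at e2
      have e3 := hh2_succ t a (v + 1) m
      have e4 := ih (m + 1)
      have e5 := ihm
      linear_combination e1 + e4 + (t (a + (v + 1))) * e5 - (t a) * e3 - e2

lemma newton (t : ℕ → ℝ) (x : ℝ) : ∀ Q : ℕ,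
    ∑ J ∈ range (Q + 1), (∏ k ∈ Icc 1 J, (x - t k)) * hh2 t 1 (J + 1) (Q - J) = x ^ Q := by
  intro Q
  induction Q with
  | zero => simp [hh2_m0]
  | succ Q ih =>
    set N : ℕ → ℝ := fun J => ∏ k ∈ Icc 1 J, (x - t k) with hN
    set f : ℕ → ℝ := fun J => N J * hh2 t 1 J (Q + 1 - J) with hf
    set S2 : ℝ := ∑ J ∈ range (Q + 1), t (J + 1) * (N J * hh2 t 1 (J + 1) (Q - J)) with hS2
    have h1 : ∑ J ∈ range (Q + 1 + 1), N J * hh2 t 1 (J + 1) (Q + 1 - J)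
        = (∑ J ∈ range (Q + 1), f J) + S2 + N (Q + 1) := by
      rw [Finset.sum_range_succ]
      have e2 : hh2 t 1 (Q + 1 + 1) (Q + 1 - (Q + 1)) = 1 := by
        rw [Nat.sub_self]; exact hh2_m0 t 1 _
      rw [e2, mul_one]
      congr 1
      rw [← Finset.sum_add_distrib]
      apply Finset.sum_congr rfl
      intro J hJ
      rw [Finset.mem_range] at hJ
      have e := hh2_succ t 1 J (Q - J)
      rw [show Q - J + 1 = Q + 1 - J by omega, show (1 : ℕ) + J = J + 1 by omega] at e
      rw [e, hf]; ring
    have h3 : x * ∑ J ∈ range (Q + 1), N J * hh2 t 1 (J + 1) (Q - J)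
        = (∑ J ∈ range (Q + 1), f (J + 1)) + S2 := by
      rw [Finset.mul_sum, hS2, ← Finset.sum_add_distrib]
      apply Finset.sum_congr rfl
      intro J hJ
      have hNsucc : N (J + 1) = N J * (x - t (J + 1)) := Finset.prod_Icc_succ_top (by omega) _
      rw [hf]
      simp only
      rw [hNsucc, show Q + 1 - (J + 1) = Q - J by omega]
      ring
    have h5 : ∑ J ∈ range (Q + 2), f J = (∑ J ∈ range (Q + 1), f (J + 1)) + f 0 :=
      Finset.sum_range_succ' f (Q + 1)
    have h6 : f 0 = 0 := by rw [hf]; simp [hh2_v0]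
    have h7 : ∑ J ∈ range (Q + 2), f J = (∑ J ∈ range (Q + 1), f J) + f (Q + 1) :=
      Finset.sum_range_succ f (Q + 1)
    have h8 : f (Q + 1) = N (Q + 1) := by
      rw [hf]; simp only; rw [Nat.sub_self, hh2_m0, mul_one]
    have ih' : ∑ J ∈ range (Q + 1), N J * hh2 t 1 (J + 1) (Q - J) = x ^ Q := ih
    rw [h1, pow_succ, mul_comm (x ^ Q) x, ← ih', h3]
    linarith [h5, h6, h7, h8]

/-- entries of the partial product `F_r ⋯ F_1` (closed form). -/
noncomputable def QFe (n : ℕ) (t : ℕ → ℝ) (r P Q : ℕ) : ℝ :=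
  if Q ≤ P ∧ n - r ≤ Q then
    ∏ k ∈ Finset.Icc (n + 1 - r) Q, (t (P + 1) - t k) / (t (Q + 1) - t k)
  else if P = Q then 1 else 0

/-- partial product `F_r ⋯ F_1` (closed form), as a matrix. -/
noncomputable def QF (n : ℕ) (t : ℕ → ℝ) (r : ℕ) : Matrix (Fin (n + 1)) (Fin (n + 1)) ℝ :=
  Matrix.of fun p q => QFe n t r p.val q.val

/-- entries of the partial product `G_1 ⋯ G_r` (closed form). -/
noncomputable def PFe (n : ℕ) (t : ℕ → ℝ) (r P Q : ℕ) : ℝ :=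
  if P ≤ Q ∧ Q ≤ P + r then
    hh2 t (max 1 (Q + 1 - r)) (P + 2 - max 1 (Q + 1 - r)) (Q - P)
  else 0

/-- partial product `G_1 ⋯ G_r` (closed form), as a matrix. -/
noncomputable def PF (n : ℕ) (t : ℕ → ℝ) (r : ℕ) : Matrix (Fin (n + 1)) (Fin (n + 1)) ℝ :=
  Matrix.of fun p q => PFe n t r p.val q.val

/-- The Newton-basis matrix `W`. -/
noncomputable def Wmat (n : ℕ) (t : ℕ → ℝ) : Matrix (Fin (n + 1)) (Fin (n + 1)) ℝ :=
  Matrix.of fun p q => ∏ k ∈ Finset.Icc 1 q.val, (t (p.val + 1) - t k)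

section MatrixLemmas

variable (n : ℕ) (t : ℕ → ℝ)

lemma mul_F (A : Matrix (Fin (n + 1)) (Fin (n + 1)) ℝ) (i : ℕ) (p q : Fin (n + 1)) :
    (A * Fmat n t i) p q = A p q +
      (if h : q.val < n ∧ i ≤ q.val + 1 then
        A p ⟨q.val + 1, by omega⟩ * mEntry t (q.val + 2) (q.val + 2 - i) else 0) := by
  rw [Matrix.mul_apply]
  have hF : ∀ j : Fin (n + 1), Fmat n t i j q
      = (if j = q then (1 : ℝ) else 0)
        + (if j.val = q.val + 1 ∧ i ≤ j.val then mEntry t (j.val + 1) (j.val + 1 - i) else 0) := by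
    intro j
    simp only [Fmat, Matrix.of_apply]
    by_cases h1 : j.val = q.val
    · simp [h1, Fin.ext_iff]
    · simp [h1, Fin.ext_iff]
  simp only [hF, mul_add]
  rw [Finset.sum_add_distrib]
  congr 1
  · simp [mul_ite]
  · by_cases h : q.val < n ∧ i ≤ q.val + 1
    · rw [dif_pos h]
      rw [Fintype.sum_eq_single (⟨q.val + 1, by omega⟩ : Fin (n + 1))
          (fun j hj => by
            rw [if_neg, mul_zero]
            rintro ⟨hj1, -⟩
            exact hj (Fin.ext hj1))]
      rw [if_pos ⟨rfl, by exact (by omega : i ≤ q.val + 1)⟩]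
    · rw [dif_neg h]
      apply Finset.sum_eq_zero
      intro j _
      rw [if_neg, mul_zero]
      rintro ⟨hj1, hj2⟩
      exact h ⟨by omega, by omega⟩

lemma mul_G (A : Matrix (Fin (n + 1)) (Fin (n + 1)) ℝ) (i : ℕ) (p q : Fin (n + 1)) :
    (A * Gmat n t i) p q = A p q +
      (if h : 1 ≤ q.val ∧ i ≤ q.val then
        A p ⟨q.val - 1, by omega⟩ * t (q.val + 1 - i) else 0) := by
  rw [Matrix.mul_apply]
  have hG : ∀ j : Fin (n + 1), Gmat n t i j q
      = (if j = q then (1 : ℝ) else 0)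
        + (if q.val = j.val + 1 ∧ i ≤ q.val then t (q.val + 1 - i) else 0) := by
    intro j
    simp only [Gmat, Matrix.of_apply]
    by_cases h1 : j.val = q.val
    · simp [h1, Fin.ext_iff]
    · simp [h1, Fin.ext_iff]
  simp only [hG, mul_add]
  rw [Finset.sum_add_distrib]
  congr 1
  · simp [mul_ite]
  · by_cases h : 1 ≤ q.val ∧ i ≤ q.val
    · rw [dif_pos h]
      rw [Fintype.sum_eq_single (⟨q.val - 1, by omega⟩ : Fin (n + 1))
          (fun j hj => by
            rw [if_neg, mul_zero]
            rintro ⟨hj1, -⟩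
            exact hj (Fin.ext (show j.val = q.val - 1 by omega)))]
      rw [if_pos ⟨show q.val = q.val - 1 + 1 by omega, h.2⟩]
    · rw [dif_neg h]
      apply Finset.sum_eq_zero
      intro j _
      rw [if_neg, mul_zero]
      rintro ⟨hj1, hj2⟩
      exact h ⟨by omega, hj2⟩


lemma prod_Icc_bot (f : ℕ → ℝ) (a b : ℕ) (h : a ≤ b) :
    ∏ k ∈ Icc a b, f k = f a * ∏ k ∈ Icc (a + 1) b, f k := by
  rw [Finset.Icc_add_one_left_eq_Ioc, ← Finset.Ioc_insert_left h, Finset.prod_insert (by simp)]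

lemma prod_reindex_flip (f : ℕ → ℝ) (c M : ℕ) (hcM : 1 ≤ c + M) :
    ∏ k ∈ Icc 1 M, f (c + M - k) = ∏ j ∈ Icc c (c + M - 1), f j := by
  rcases Nat.eq_zero_or_pos M with hM | hM
  · subst hM
    rw [Finset.Icc_eq_empty (by omega), Finset.Icc_eq_empty (by omega)]
    simp
  · apply Finset.prod_nbij' (fun k => c + M - k) (fun j => c + M - j)
    · intro k hk; rw [Finset.mem_Icc] at *; omega
    · intro j hj; rw [Finset.mem_Icc] at *; omega
    · intro k hk; rw [Finset.mem_Icc] at hk; omega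
    · intro j hj; rw [Finset.mem_Icc] at hj; omega
    · intro k _; rfl

lemma mEntry_eq (t : ℕ → ℝ) (Q c : ℕ) (hc : 1 ≤ c) (hcQ : c ≤ Q + 2) :
    mEntry t (Q + 2) (Q + 3 - c)
      = (∏ j ∈ Icc c (Q + 1), (t (Q + 2) - t j)) / ∏ j ∈ Icc (c - 1) Q, (t (Q + 1) - t j) := by
  rw [mEntry, show Q + 3 - c - 1 = Q + 2 - c by omega]
  rw [Finset.prod_div_distrib]
  congr 1
  · have h1 : ∀ k ∈ Icc 1 (Q + 2 - c), t (Q + 2) - t (Q + 2 - k)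
        = (fun j => t (Q + 2) - t j) (c + (Q + 2 - c) - k) := by
      intro k hk; rw [Finset.mem_Icc] at hk
      simp only
      congr 2
      omega
    rw [Finset.prod_congr rfl h1, prod_reindex_flip (fun j => t (Q + 2) - t j) c (Q + 2 - c) (by omega),
      show c + (Q + 2 - c) - 1 = Q + 1 by omega]
  · have h1 : ∀ k ∈ Icc 1 (Q + 2 - c), t (Q + 2 - 1) - t (Q + 2 - k - 1)
        = (fun j => t (Q + 1) - t j) ((c - 1) + (Q + 2 - c) - k) := by
      intro k hk; rw [Finset.mem_Icc] at hk
      simp only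
      congr 2 <;> omega
    rw [Finset.prod_congr rfl h1, prod_reindex_flip (fun j => t (Q + 1) - t j) (c - 1) (Q + 2 - c) (by omega),
      show (c - 1) + (Q + 2 - c) - 1 = Q by omega]

lemma QF_zero : QF n t 0 = 1 := by
  funext p q
  simp only [QF, QFe, Matrix.of_apply, Matrix.one_apply, Fin.ext_iff]
  by_cases h : q.val ≤ p.val ∧ n - 0 ≤ q.val
  · rw [if_pos h, Finset.Icc_eq_empty (by omega), Finset.prod_empty, if_pos (by omega)]
  · rw [if_neg h]

lemma PF_zero : PF n t 0 = 1 := by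
  funext p q
  simp only [PF, PFe, Matrix.of_apply, Matrix.one_apply, Fin.ext_iff]
  by_cases h : p.val ≤ q.val ∧ q.val ≤ p.val + 0
  · rw [if_pos h, show q.val - p.val = 0 by omega, hh2_m0, if_pos (by omega)]
  · rw [if_neg h, if_neg (by omega)]

variable {n t} in
lemma QFe_step (hne : ∀ k l : ℕ, 1 ≤ l → l < k → k ≤ n + 1 → t k - t l ≠ 0)
    {r : ℕ} (hr : r + 1 ≤ n) (P Q : ℕ) (hP : P ≤ n) (hQ : Q ≤ n) :
    QFe n t r P Q + (if Q < n ∧ n - r ≤ Q + 1 then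
        QFe n t r P (Q + 1) * mEntry t (Q + 2) (Q + 2 - (n - r)) else 0)
      = QFe n t (r + 1) P Q := by
  unfold QFe
  by_cases hqp : Q ≤ P
  case neg =>
    rw [if_neg (show ¬(Q + 1 ≤ P ∧ n - r ≤ Q + 1) by omega),
      if_neg (show ¬(P = Q + 1) by omega), zero_mul, ite_self, add_zero,
      if_neg (show ¬(Q ≤ P ∧ n - r ≤ Q) by omega),
      if_neg (show ¬(Q ≤ P ∧ n - (r + 1) ≤ Q) by omega)]
  case pos =>
  by_cases hnew : n - (r + 1) ≤ Q
  case neg =>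
    rw [if_neg (show ¬(Q < n ∧ n - r ≤ Q + 1) by omega), add_zero,
      if_neg (show ¬(Q ≤ P ∧ n - r ≤ Q) by omega),
      if_neg (show ¬(Q ≤ P ∧ n - (r + 1) ≤ Q) by omega)]
  case pos =>
  by_cases hPQ : P = Q
  case pos =>
    subst hPQ
    rw [if_neg (show ¬(P + 1 ≤ P ∧ n - r ≤ P + 1) by omega),
      if_neg (show ¬(P = P + 1) by omega), zero_mul, ite_self, add_zero,
      if_pos (show P ≤ P ∧ n - (r + 1) ≤ P from ⟨le_refl P, by omega⟩)]
    by_cases hold : n - r ≤ P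
    · rw [if_pos (show P ≤ P ∧ n - r ≤ P from ⟨le_refl P, hold⟩),
        Finset.prod_eq_one (fun k hk => ?_), Finset.prod_eq_one (fun k hk => ?_)]
      · rw [Finset.mem_Icc] at hk
        exact div_self (hne (P + 1) k (by omega) (by omega) (by omega))
      · rw [Finset.mem_Icc] at hk
        exact div_self (hne (P + 1) k (by omega) (by omega) (by omega))
    · rw [if_neg (show ¬(P ≤ P ∧ n - r ≤ P) by omega), if_pos rfl,
        Finset.Icc_eq_empty (show ¬(n + 1 - (r + 1) ≤ P) by omega), Finset.prod_empty]
  case neg =>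
    rw [if_pos (show Q < n ∧ n - r ≤ Q + 1 from ⟨by omega, by omega⟩),
      if_pos (show Q + 1 ≤ P ∧ n - r ≤ Q + 1 from ⟨by omega, by omega⟩),
      if_pos (show Q ≤ P ∧ n - (r + 1) ≤ Q from ⟨hqp, hnew⟩),
      show Q + 2 - (n - r) = Q + 3 - (n + 1 - r) by omega,
      mEntry_eq t Q (n + 1 - r) (by omega) (by omega),
      show n + 1 - r - 1 = n - r by omega,
      show n + 1 - (r + 1) = n - r by omega]
    by_cases hold : n - r ≤ Q
    · rw [if_pos (show Q ≤ P ∧ n - r ≤ Q from ⟨hqp, hold⟩)]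
      simp only [Finset.prod_div_distrib]
      rw [prod_Icc_bot (fun k => t (P + 1) - t k) (n - r) Q hold,
        prod_Icc_bot (fun k => t (Q + 1) - t k) (n - r) Q hold,
        show n - r + 1 = n + 1 - r by omega,
        Finset.prod_Icc_succ_top (show n + 1 - r ≤ Q + 1 by omega)
          (fun k => t (P + 1) - t k)]
      have hb : ∏ k ∈ Icc (n + 1 - r) Q, (t (Q + 1) - t k) ≠ 0 := by
        apply Finset.prod_ne_zero_iff.mpr
        intro k hk
        rw [Finset.mem_Icc] at hk
        exact hne (Q + 1) k (by omega) (by omega) (by omega)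
      have hbb : t (Q + 1) - t (n - r) ≠ 0 := hne (Q + 1) (n - r) (by omega) (by omega) (by omega)
      have hd : ∏ k ∈ Icc (n + 1 - r) (Q + 1), (t (Q + 2) - t k) ≠ 0 := by
        apply Finset.prod_ne_zero_iff.mpr
        intro k hk
        rw [Finset.mem_Icc] at hk
        exact hne (Q + 2) k (by omega) (by omega) (by omega)
      field_simp
      ring
    · rw [if_neg (show ¬(Q ≤ P ∧ n - r ≤ Q) by omega), if_neg hPQ,
        Finset.Icc_eq_empty (show ¬(n + 1 - r ≤ Q + 1) by omega),
        Finset.Icc_eq_empty (show ¬(n - r ≤ Q) by omega), Finset.prod_empty, Finset.prod_empty]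
      norm_num

variable {n t} in
lemma F_step (hne : ∀ k l : ℕ, 1 ≤ l → l < k → k ≤ n + 1 → t k - t l ≠ 0)
    {r : ℕ} (hr : r + 1 ≤ n) :
    QF n t r * Fmat n t (n - r) = QF n t (r + 1) := by
  funext p q
  rw [mul_F]
  have e1 : QF n t r p q = QFe n t r p.val q.val := rfl
  have e2 : QF n t (r + 1) p q = QFe n t (r + 1) p.val q.val := rfl
  rw [e1, e2, ← QFe_step hne hr p.val q.val (by omega) (by omega)]
  refine congrArg _ ?_
  by_cases hcond : q.val < n ∧ n - r ≤ q.val + 1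
  · rw [dif_pos hcond, if_pos hcond]; rfl
  · rw [dif_neg hcond, if_neg hcond]

variable {n t} in
lemma PFe_step (r P Q : ℕ) :
    PFe n t r P Q + (if 1 ≤ Q ∧ r + 1 ≤ Q then
        PFe n t r P (Q - 1) * t (Q + 1 - (r + 1)) else 0)
      = PFe n t (r + 1) P Q := by
  unfold PFe
  by_cases hpq : P ≤ Q
  case neg =>
    rw [if_neg (show ¬(P ≤ Q - 1 ∧ Q - 1 ≤ P + r) by omega), zero_mul, ite_self, add_zero,
      if_neg (show ¬(P ≤ Q ∧ Q ≤ P + r) by omega),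
      if_neg (show ¬(P ≤ Q ∧ Q ≤ P + (r + 1)) by omega)]
  case pos =>
  by_cases hub : Q ≤ P + (r + 1)
  case neg =>
    rw [if_neg (show ¬(P ≤ Q - 1 ∧ Q - 1 ≤ P + r) by omega), zero_mul, ite_self, add_zero,
      if_neg (show ¬(P ≤ Q ∧ Q ≤ P + r) by omega),
      if_neg (show ¬(P ≤ Q ∧ Q ≤ P + (r + 1)) by omega)]
  case pos =>
  by_cases hrq : r + 1 ≤ Q
  case neg =>
    rw [if_neg (show ¬(1 ≤ Q ∧ r + 1 ≤ Q) by omega), add_zero,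
      if_pos (show P ≤ Q ∧ Q ≤ P + r from ⟨hpq, by omega⟩),
      if_pos (show P ≤ Q ∧ Q ≤ P + (r + 1) from ⟨hpq, hub⟩),
      show max 1 (Q + 1 - r) = 1 by omega, show max 1 (Q + 1 - (r + 1)) = 1 by omega]
  case pos =>
  by_cases hPQ : P = Q
  case pos =>
    subst hPQ
    rw [if_neg (show ¬(P ≤ P - 1 ∧ P - 1 ≤ P + r) by omega), zero_mul, ite_self, add_zero,
      if_pos (show P ≤ P ∧ P ≤ P + r from ⟨le_refl P, by omega⟩),
      if_pos (show P ≤ P ∧ P ≤ P + (r + 1) from ⟨le_refl P, by omega⟩),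
      Nat.sub_self, hh2_m0, hh2_m0]
  case neg =>
    rw [if_pos (show 1 ≤ Q ∧ r + 1 ≤ Q from ⟨by omega, hrq⟩),
      if_pos (show P ≤ Q - 1 ∧ Q - 1 ≤ P + r from ⟨by omega, by omega⟩),
      if_pos (show P ≤ Q ∧ Q ≤ P + (r + 1) from ⟨hpq, hub⟩),
      show max 1 (Q - 1 + 1 - r) = Q - r by omega,
      show max 1 (Q + 1 - (r + 1)) = Q - r by omega,
      show Q + 1 - (r + 1) = Q - r by omega,
      show Q - 1 - P = Q - P - 1 by omega]
    by_cases hQr : Q ≤ P + r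
    · rw [if_pos (show P ≤ Q ∧ Q ≤ P + r from ⟨hpq, hQr⟩),
        show max 1 (Q + 1 - r) = Q - r + 1 by omega,
        show P + 2 - (Q - r + 1) = P + 1 - (Q - r) by omega]
      have hp := hh2_peel t (Q - r) (P + 1 - (Q - r)) (Q - P - 1)
      rw [show P + 1 - (Q - r) + 1 = P + 2 - (Q - r) by omega,
        show Q - P - 1 + 1 = Q - P by omega] at hp
      linarith [hp]
    · rw [if_neg (show ¬(P ≤ Q ∧ Q ≤ P + r) by omega), zero_add,
        show P + 2 - (Q - r) = 1 by omega]
      have hp := hh2_peel t (Q - r) 0 (Q - P - 1)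
      rw [hh2_v0, show Q - P - 1 + 1 = Q - P by omega] at hp
      linarith [hp]

variable {n t} in
lemma G_step (r : ℕ) : PF n t r * Gmat n t (r + 1) = PF n t (r + 1) := by
  funext p q
  rw [mul_G]
  have e1 : PF n t r p q = PFe n t r p.val q.val := rfl
  have e2 : PF n t (r + 1) p q = PFe n t (r + 1) p.val q.val := rfl
  rw [e1, e2, ← PFe_step r p.val q.val]
  refine congrArg _ ?_
  by_cases hcond : 1 ≤ q.val ∧ r + 1 ≤ q.val
  · rw [dif_pos hcond, if_pos hcond]; rfl
  · rw [dif_neg hcond, if_neg hcond]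


variable {n t} in
lemma Fprod (hne : ∀ k l : ℕ, 1 ≤ l → l < k → k ≤ n + 1 → t k - t l ≠ 0) :
    ∀ r, r ≤ n → ((List.range r).map (fun k => Fmat n t (n - k))).prod = QF n t r := by
  intro r
  induction r with
  | zero => intro _; simpa using (QF_zero n t).symm
  | succ r ih =>
    intro h
    rw [List.range_succ, List.map_append, List.prod_append, ih (by omega)]
    simp only [List.map_cons, List.map_nil, List.prod_cons, List.prod_nil, mul_one]
    exact F_step hne h

variable {n t} in
lemma Gprod : ∀ r : ℕ, ((List.range r).map (fun k => Gmat n t (k + 1))).prod = PF n t r := by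
  intro r
  induction r with
  | zero => simpa using (PF_zero n t).symm
  | succ r ih =>
    rw [List.range_succ, List.map_append, List.prod_append, ih]
    simp only [List.map_cons, List.map_nil, List.prod_cons, List.prod_nil, mul_one]
    exact G_step r

variable {n t} in
lemma QFD (hne : ∀ k l : ℕ, 1 ≤ l → l < k → k ≤ n + 1 → t k - t l ≠ 0) :
    QF n t n * Dmat n t = Wmat n t := by
  funext p q
  rw [show Dmat n t = Matrix.diagonal (fun i : Fin (n + 1) => pEntry t (i.val + 1)) from rfl,
    Matrix.mul_diagonal]
  have e1 : QF n t n p q = QFe n t n p.val q.val := rfl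
  have e2 : Wmat n t p q = ∏ k ∈ Icc 1 q.val, (t (p.val + 1) - t k) := rfl
  rw [e1, e2]
  unfold QFe
  have hp : pEntry t (q.val + 1) = ∏ k ∈ Icc 1 q.val, (t (q.val + 1) - t k) := by
    unfold pEntry
    rw [show q.val + 1 - 1 = q.val from rfl]
  rw [hp]
  by_cases h : q.val ≤ p.val
  · rw [if_pos (show q.val ≤ p.val ∧ n - n ≤ q.val from ⟨h, by omega⟩),
      show n + 1 - n = 1 by omega, Finset.prod_div_distrib, div_mul_cancel₀]
    apply Finset.prod_ne_zero_iff.mpr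
    intro k hk
    rw [Finset.mem_Icc] at hk
    exact hne (q.val + 1) k (by omega) (by omega) (by omega)
  · rw [if_neg (show ¬(q.val ≤ p.val ∧ n - n ≤ q.val) by omega),
      if_neg (show ¬(p.val = q.val) by omega), zero_mul]
    refine (Finset.prod_eq_zero
      (Finset.mem_Icc.mpr (show 1 ≤ p.val + 1 ∧ p.val + 1 ≤ q.val by omega)) ?_).symm
    simp

end MatrixLemmas

/-- bidiagonal factorization of the Vandermonde matrix:
`V = F_n ⋯ F_1 · D · G_1 ⋯ G_n` for pairwise distinct nodes `t 1, …, t (n+1)`. -/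
theorem vandermonde_bidiagonal_factorization
    (n : ℕ) (hn : 1 ≤ n) (t : ℕ → ℝ)
    (ht : ∀ i j, 1 ≤ i → i ≤ n + 1 → 1 ≤ j → j ≤ n + 1 → i ≠ j → t i ≠ t j)
    (V : Matrix (Fin (n + 1)) (Fin (n + 1)) ℝ)
    (hV : ∀ i j, V i j = (t (i.val + 1)) ^ j.val) :
    V = ((List.range n).map (fun k => Fmat n t (n - k))).prod * Dmat n t *
        ((List.range n).map (fun k => Gmat n t (k + 1))).prod := by
  have hne : ∀ k l : ℕ, 1 ≤ l → l < k → k ≤ n + 1 → t k - t l ≠ 0 := by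
    intro k l h1 h2 h3
    exact sub_ne_zero.mpr (ht k l (by omega) h3 h1 (by omega) (by omega))
  rw [Fprod hne n (le_refl n), Gprod n, QFD hne]
  funext p q
  rw [hV, Matrix.mul_apply]
  have hPF : ∀ j : Fin (n + 1), PF n t n j q
      = if j.val ≤ q.val then hh2 t 1 (j.val + 1) (q.val - j.val) else 0 := by
    intro j
    have e : PF n t n j q = PFe n t n j.val q.val := rfl
    rw [e]
    unfold PFe
    by_cases h : j.val ≤ q.val
    · rw [if_pos (show j.val ≤ q.val ∧ q.val ≤ j.val + n from ⟨h, by omega⟩), if_pos h,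
        show max 1 (q.val + 1 - n) = 1 by omega, show j.val + 2 - 1 = j.val + 1 by omega]
    · rw [if_neg (show ¬(j.val ≤ q.val ∧ q.val ≤ j.val + n) by omega), if_neg h]
  have eW : ∀ j : Fin (n + 1),
      Wmat n t p j = ∏ k ∈ Icc 1 j.val, (t (p.val + 1) - t k) := fun _ => rfl
  simp only [hPF, eW]
  rw [Fin.sum_univ_eq_sum_range (fun J => (∏ k ∈ Icc 1 J, (t (p.val + 1) - t k)) *
      (if J ≤ q.val then hh2 t 1 (J + 1) (q.val - J) else 0))]
  rw [← Finset.sum_subset (Finset.range_subset_range.mpr (show q.val + 1 ≤ n + 1 by omega))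
      (fun J hJ hJ' => by
        rw [Finset.mem_range] at hJ
        rw [if_neg (by rw [Finset.mem_range] at hJ'; omega), mul_zero])]
  have hc : ∑ J ∈ range (q.val + 1), (∏ k ∈ Icc 1 J, (t (p.val + 1) - t k)) *
        (if J ≤ q.val then hh2 t 1 (J + 1) (q.val - J) else 0)
      = ∑ J ∈ range (q.val + 1), (∏ k ∈ Icc 1 J, (t (p.val + 1) - t k)) *
        hh2 t 1 (J + 1) (q.val - J) := by
    apply Finset.sum_congr rfl
    intro J hJ
    rw [Finset.mem_range] at hJ
    rw [if_pos (by omega)]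
  rw [hc, newton t (t (p.val + 1)) q.val]
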